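/- Let 𝒜 be an associative unital algebra over a field K, let q, λ ∈ K be nonzero, and let â, b̂, ĉ, d̂ ∈ 𝒜 satisfy: â*b̂ = q⁻¹λ⁻¹•(b̂*â), â*ĉ = q⁻¹λ•(ĉ*â), b̂*d̂ = q⁻¹λ•(d̂*b̂), ĉ*d̂ = q⁻¹λ⁻¹•(d̂*ĉ), â*d̂ − d̂*â = (q⁻¹−q)λ⁻¹•(b̂*ĉ), and λ⁻¹•(b̂*ĉ) = λ•(ĉ*b̂). Set D̂ := â*d̂ − q⁻¹λ⁻¹•(b̂*ĉ). Then: â*D̂ = D̂*â, b̂*D̂ = λ^2•(D̂*b̂), ĉ*D̂ = λ⁻²•(D̂*ĉ), and d̂*D̂ = D̂*d̂. -/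
import Mathlib


/-- The quantum determinant `D̂ = âd̂ − q⁻¹λ⁻¹ b̂ĉ` of the two-parametric standard quantum
group `Fun_{q,λ}(GL(2))` commutes with `â` and `d̂`, and `λ²`-commutes with `b̂` and `ĉ`. -/
theorem quantum_determinant_commutation {K : Type*} [Field K] {A : Type*} [Ring A]
    [Algebra K A] (q lam : K) (hq : q ≠ 0) (hlam : lam ≠ 0) (a b c d D : A)
    (hab : a * b = (q⁻¹ * lam⁻¹) • (b * a))
    (hac : a * c = (q⁻¹ * lam) • (c * a))
    (hbd : b * d = (q⁻¹ * lam) • (d * b))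
    (hcd : c * d = (q⁻¹ * lam⁻¹) • (d * c))
    (had : a * d - d * a = ((q⁻¹ - q) * lam⁻¹) • (b * c))
    (hbc : lam⁻¹ • (b * c) = lam • (c * b))
    (hD : D = a * d - (q⁻¹ * lam⁻¹) • (b * c)) :
    a * D = D * a ∧
    b * D = lam ^ 2 • (D * b) ∧
    c * D = (lam⁻¹) ^ 2 • (D * c) ∧
    d * D = D * d := by
  have hba : b * a = (q * lam) • (a * b) := by
    rw [hab, smul_smul, show q * lam * (q⁻¹ * lam⁻¹) = 1 by field_simp, one_smul]
  have hca : c * a = (q * lam⁻¹) • (a * c) := by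
    rw [hac, smul_smul, show q * lam⁻¹ * (q⁻¹ * lam) = 1 by field_simp, one_smul]
  have hdb : d * b = (q * lam⁻¹) • (b * d) := by
    rw [hbd, smul_smul, show q * lam⁻¹ * (q⁻¹ * lam) = 1 by field_simp, one_smul]
  have hdc : d * c = (q * lam) • (c * d) := by
    rw [hcd, smul_smul, show q * lam * (q⁻¹ * lam⁻¹) = 1 by field_simp, one_smul]
  have hbc' : b * c = (lam * lam) • (c * b) := by
    have h := congrArg (lam • ·) hbc
    simpa [smul_smul, mul_inv_cancel₀ hlam] using h
  have hcb : c * b = (lam⁻¹ * lam⁻¹) • (b * c) := by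
    have h := congrArg (lam⁻¹ • ·) hbc.symm
    simpa [smul_smul, inv_mul_cancel₀ hlam] using h
  have had' : a * d = ((q⁻¹ - q) * lam⁻¹) • (b * c) + d * a := by rw [← had]; abel
  have hda : d * a = a * d - ((q⁻¹ - q) * lam⁻¹) • (b * c) := by rw [← had]; abel
  have habc : a * (b * c) = ((q⁻¹ * lam⁻¹) * (q⁻¹ * lam)) • (b * (c * a)) := by
    rw [← mul_assoc a b c, hab, smul_mul_assoc, mul_assoc b a c, hac, mul_smul_comm, smul_smul]
  have haad : a * (a * d) = ((q⁻¹ - q) * lam⁻¹) • (a * (b * c)) + a * d * a := by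
    conv_lhs => rw [had']
    rw [mul_add, mul_smul_comm, ← mul_assoc a d a]
  have hbad : b * (a * d) = ((q * lam) * (q⁻¹ * lam)) • (a * (d * b)) := by
    rw [← mul_assoc b a d, hba, smul_mul_assoc, mul_assoc a b d, hbd, mul_smul_comm, smul_smul]
  have hbbc : b * (b * c) = (lam * lam) • (b * (c * b)) := by
    rw [hbc', mul_smul_comm]
  have hcad : c * (a * d) = ((q * lam⁻¹) * (q⁻¹ * lam⁻¹)) • (a * (d * c)) := by
    rw [← mul_assoc c a d, hca, smul_mul_assoc, mul_assoc a c d, hcd, mul_smul_comm, smul_smul]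
  have hcbc : c * (b * c) = (lam⁻¹ * lam⁻¹) • (b * (c * c)) := by
    rw [← mul_assoc c b c, hcb, smul_mul_assoc, mul_assoc b c c]
  have hdbc : d * (b * c) = ((q * lam⁻¹) * (q * lam)) • (b * (c * d)) := by
    rw [← mul_assoc d b c, hdb, smul_mul_assoc, mul_assoc b d c, hdc, mul_smul_comm, smul_smul]
  have hdad : d * (a * d) = a * (d * d) - ((q⁻¹ - q) * lam⁻¹) • (b * (c * d)) := by
    rw [← mul_assoc d a d, hda, sub_mul, smul_mul_assoc, mul_assoc a d d, mul_assoc b c d]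
  refine ⟨?_, ?_, ?_, ?_⟩
  · simp only [hD, mul_sub, sub_mul, smul_sub, mul_smul_comm, smul_mul_assoc, smul_smul]
    rw [mul_assoc b c a, haad, habc]
    match_scalars <;> field_simp <;> ring
  · simp only [hD, mul_sub, sub_mul, smul_sub, mul_smul_comm, smul_mul_assoc, smul_smul]
    rw [mul_assoc a d b, mul_assoc b c b, hbad, hbbc]
    match_scalars <;> field_simp <;> ring
  · simp only [hD, mul_sub, sub_mul, smul_sub, mul_smul_comm, smul_mul_assoc, smul_smul]
    rw [mul_assoc a d c, mul_assoc b c c, hcad, hcbc]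
    match_scalars <;> field_simp <;> ring
  · simp only [hD, mul_sub, sub_mul, smul_sub, mul_smul_comm, smul_mul_assoc, smul_smul]
    rw [mul_assoc a d d, mul_assoc b c d, hdad, hdbc]
    match_scalars <;> field_simp <;> ring
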